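/- Let B₁ and B₂ be Banach algebras with commuting bounded representations π₁ : B₁ → B(X) and π₂ : B₂ → B(X) on a Banach space X, and let π₁ ⊙̂ π₂ : B₁ ⊗̂ B₂ → B(X) be the induced bounded representation of the projective tensor product. Then π₁ ⊙̂ π₂ is non-degenerate if and only if both π₁ and π₂ are non-degenerate. -/
import Mathlib


open scoped TensorProduct

/-- For commuting bounded representations `π₁, π₂` of Banach algebras on a Banach space
`X`, the induced representation `π₁ ⊙̂ π₂` of the (projective) tensor product (the
unique one with `φ(b₁ ⊗ b₂) = π₁(b₁) π₂(b₂)`) is non-degenerate if and only if both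
`π₁` and `π₂` are non-degenerate. -/
theorem stmt4 {B₁ B₂ X : Type*} [NormedRing B₁] [NormedRing B₂]
    [NormedAlgebra ℂ B₁] [NormedAlgebra ℂ B₂]
    [CompleteSpace B₁] [CompleteSpace B₂]
    [NormedAddCommGroup X] [NormedSpace ℂ X] [CompleteSpace X]
    (π₁ : B₁ →L[ℂ] X →L[ℂ] X) (π₂ : B₂ →L[ℂ] X →L[ℂ] X)
    (hπ₁ : ∀ a b, π₁ (a * b) = π₁ a * π₁ b)
    (hπ₂ : ∀ a b, π₂ (a * b) = π₂ a * π₂ b)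
    (hcomm : ∀ b₁ b₂, π₁ b₁ * π₂ b₂ = π₂ b₂ * π₁ b₁)
    (φ : B₁ ⊗[ℂ] B₂ →ₗ[ℂ] X →L[ℂ] X)
    (hφ : ∀ b₁ b₂, φ (b₁ ⊗ₜ[ℂ] b₂) = π₁ b₁ * π₂ b₂) :
    Dense (↑(Submodule.span ℂ {y : X | ∃ t x, y = φ t x}) : Set X) ↔
      (Dense (↑(Submodule.span ℂ {y : X | ∃ b x, y = π₁ b x}) : Set X) ∧
       Dense (↑(Submodule.span ℂ {y : X | ∃ b x, y = π₂ b x}) : Set X)) := by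
  set S := Submodule.span ℂ {y : X | ∃ t x, y = φ t x} with hS
  set S₁ := Submodule.span ℂ {y : X | ∃ b x, y = π₁ b x} with hS₁
  set S₂ := Submodule.span ℂ {y : X | ∃ b x, y = π₂ b x} with hS₂
  have key1 : ∀ (t : B₁ ⊗[ℂ] B₂) (x : X), φ t x ∈ S₁ := by
    intro t x
    induction t using TensorProduct.induction_on with
    | zero => simp
    | tmul b c =>
        rw [hφ]
        exact Submodule.subset_span ⟨b, π₂ c x, rfl⟩
    | add t₁ t₂ h₁ h₂ =>
        rw [map_add, ContinuousLinearMap.add_apply]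
        exact S₁.add_mem h₁ h₂
  have key2 : ∀ (t : B₁ ⊗[ℂ] B₂) (x : X), φ t x ∈ S₂ := by
    intro t x
    induction t using TensorProduct.induction_on with
    | zero => simp
    | tmul b c =>
        rw [hφ, hcomm]
        exact Submodule.subset_span ⟨c, π₁ b x, rfl⟩
    | add t₁ t₂ h₁ h₂ =>
        rw [map_add, ContinuousLinearMap.add_apply]
        exact S₂.add_mem h₁ h₂
  constructor
  · intro h
    have hsub1 : (S : Set X) ⊆ (S₁ : Set X) := by
      rw [hS]
      refine Submodule.span_le.mpr ?_
      rintro y ⟨t, x, rfl⟩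
      exact key1 t x
    have hsub2 : (S : Set X) ⊆ (S₂ : Set X) := by
      rw [hS]
      refine Submodule.span_le.mpr ?_
      rintro y ⟨t, x, rfl⟩
      exact key2 t x
    exact ⟨h.mono hsub1, h.mono hsub2⟩
  · rintro ⟨h₁, h₂⟩
    have hgen : ∀ (b : B₂) (x : X), π₂ b x ∈ closure (S : Set X) := by
      intro b x
      have hx : x ∈ closure (S₁ : Set X) := h₁ x
      have hmaps : Set.MapsTo (π₂ b) (S₁ : Set X) (S : Set X) := by
        intro y hy
        have : Submodule.map ((π₂ b : X →L[ℂ] X) : X →ₗ[ℂ] X) S₁ ≤ S := by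
          rw [hS₁, Submodule.map_span, Submodule.span_le]
          rintro z ⟨w, ⟨a, x', rfl⟩, rfl⟩
          have : π₂ b (π₁ a x') = φ (a ⊗ₜ[ℂ] b) x' := by
            rw [hφ, hcomm]; rfl
          simp only [ContinuousLinearMap.coe_coe, this]
          exact Submodule.subset_span ⟨a ⊗ₜ[ℂ] b, x', rfl⟩
        exact this ⟨y, hy, rfl⟩
      exact map_mem_closure (π₂ b).continuous hx hmaps
    have hsub : (S₂ : Set X) ⊆ closure (S : Set X) := by
      have : S₂ ≤ S.topologicalClosure := by
        rw [hS₂]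
        refine Submodule.span_le.mpr ?_
        rintro y ⟨b, x, rfl⟩
        exact hgen b x
      exact this
    exact dense_closure.mp (h₂.mono hsub)
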